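/- arXiv:math/0509574 — 3 statements merged into one kernel-verified Lean document; each statement's English description precedes it below -/
import Mathlib

section
/- Let Λ be a compact metric space and F a subgroup of the group of self-homeomorphisms of Λ. Suppose that for some fixed n, every finitely generated subgroup F₀ of F has a subgroup of index at most n with a global fixed point (a point fixed by every element of that subgroup). Then F itself has a subgroup of index at most n with a global fixed point. -/
/-- The group of self-homeomorphisms of a topological space, under composition. -/
instance homeoGroup (Λ : Type*) [TopologicalSpace Λ] : Group (Λ ≃ₜ Λ) where
  mul f g := g.trans f
  one := Homeomorph.refl Λ
  inv := Homeomorph.symm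
  mul_assoc f g h := Homeomorph.ext fun _ => rfl
  one_mul f := Homeomorph.ext fun _ => rfl
  mul_one f := Homeomorph.ext fun _ => rfl
  inv_mul_cancel f := Homeomorph.ext fun x => f.symm_apply_apply x


/-- Pigeonhole: if every `n+1` elements of `α` contain a repeat, then `α` is finite
with at most `n` elements. -/
lemma card_le_of_pigeonhole {α : Type*} {n : ℕ}
    (hp : ∀ f : Fin (n + 1) → α, ∃ k l, k ≠ l ∧ f k = f l) :
    Finite α ∧ Nat.card α ≤ n := by
  have hfin : Finite α := by
    by_contra hinf
    rw [not_finite_iff_infinite] at hinf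
    obtain ⟨k, l, hkl, he⟩ := hp (fun k => (Infinite.natEmbedding α) k.val)
    exact hkl (Fin.val_injective ((Infinite.natEmbedding α).injective he))
  refine ⟨hfin, ?_⟩
  by_contra hc
  push_neg at hc
  have : Fintype α := Fintype.ofFinite α
  have hcard : Fintype.card (Fin (n + 1)) ≤ Fintype.card α := by
    simpa [Nat.card_eq_fintype_card] using hc
  obtain ⟨f⟩ := Function.Embedding.nonempty_iff_card_le.mpr hcard
  obtain ⟨k, l, hkl, he⟩ := hp f
  exact hkl (f.injective he)

/-- If every finitely generated subgroup of a group `F` of homeomorphisms of a compact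
metric space has a subgroup of index at most `n` with a global fixed point, then `F`
itself has a subgroup of index at most `n` with a global fixed point. -/
theorem stmt0 {Λ : Type*} [MetricSpace Λ] [CompactSpace Λ]
    (F : Subgroup (Λ ≃ₜ Λ)) (n : ℕ)
    (h : ∀ F₀ : Subgroup (Λ ≃ₜ Λ), F₀ ≤ F → F₀.FG →
      ∃ H : Subgroup (Λ ≃ₜ Λ), H ≤ F₀ ∧ H.relIndex F₀ ≠ 0 ∧ H.relIndex F₀ ≤ n ∧
        ∃ x : Λ, ∀ g ∈ H, g x = x) :
    ∃ H : Subgroup (Λ ≃ₜ Λ), H ≤ F ∧ H.relIndex F ≠ 0 ∧ H.relIndex F ≤ n ∧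
      ∃ x : Λ, ∀ g ∈ H, g x = x := by
  classical
  set G := Λ ≃ₜ Λ
  -- index type: finitely generated subgroups of F
  let ι := {F₀ : Subgroup G // F₀ ≤ F ∧ F₀.FG}
  choose K hKle hKne hKn xf hxf using fun i : ι => h i.1 i.2.1 i.2.2
  -- the filter of "eventually containing any finite subset of F"
  let l : Filter ι := ⨅ s : Finset F, Filter.principal {i : ι | ∀ g ∈ s, (g : G) ∈ i.1}
  have hne : ∀ s : Finset F, {i : ι | ∀ g ∈ s, (g : G) ∈ i.1}.Nonempty := by
    intro s
    refine ⟨⟨Subgroup.closure (Subtype.val '' (s : Set F)), ?_, ?_⟩, ?_⟩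
    · rw [Subgroup.closure_le]
      rintro g ⟨g', _, rfl⟩; exact g'.2
    · exact (Subgroup.fg_iff _).mpr ⟨_, rfl, (s.finite_toSet.image _)⟩
    · intro g hg
      exact Subgroup.subset_closure ⟨g, hg, rfl⟩
  have hl : l.NeBot := by
    apply Filter.iInf_neBot_of_directed'
    · intro s t
      refine ⟨s ∪ t, ?_, ?_⟩ <;>
        · refine Filter.principal_mono.2 fun i hi g hg => hi g ?_
          simp only [Finset.mem_union]; tauto
    · intro s
      exact Filter.principal_neBot_iff.mpr (hne s)
  have hι : Nonempty ι := ⟨(hne ∅).choose⟩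
  let U : Ultrafilter ι := Ultrafilter.of l
  have hU : ∀ g : F, {i : ι | (g : G) ∈ i.1} ∈ U := by
    intro g
    refine Ultrafilter.of_le l ?_
    have : {i : ι | ∀ g' ∈ ({g} : Finset F), (g' : G) ∈ i.1} ∈ l :=
      Filter.mem_iInf_of_mem {g} (Filter.mem_principal_self _)
    refine Filter.mem_of_superset this fun i hi => hi g (Finset.mem_singleton_self g)
  -- the limit subgroup
  let H : Subgroup G :=
    { carrier := {g | g ∈ F ∧ ∀ᶠ i in (U : Filter ι), g ∈ K i}
      one_mem' := ⟨F.one_mem, Filter.Eventually.of_forall fun i => (K i).one_mem⟩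
      mul_mem' := fun ha hb =>
        ⟨F.mul_mem ha.1 hb.1, (ha.2.and hb.2).mono fun i hi => (K i).mul_mem hi.1 hi.2⟩
      inv_mem' := fun ha => ⟨F.inv_mem ha.1, ha.2.mono fun i hi => (K i).inv_mem hi⟩ }
  have hHF : H ≤ F := fun g hg => hg.1
  -- fixed point via compactness
  obtain ⟨x, -, hx⟩ := isCompact_univ.ultrafilter_le_nhds (U.map xf) (by simp)
  have hx : Filter.Tendsto xf (U : Filter ι) (nhds x) := hx
  have hfix : ∀ g ∈ H, g x = x := by
    intro g hg
    have h1 : Filter.Tendsto (fun i => g (xf i)) (U : Filter ι) (nhds (g x)) :=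
      (g.continuous.tendsto x).comp hx
    have h2 : Filter.Tendsto (fun i => g (xf i)) (U : Filter ι) (nhds x) := by
      refine hx.congr' ?_
      exact hg.2.mono fun i hi => (hxf i g hi).symm
    exact tendsto_nhds_unique h1 h2
  -- the pigeonhole key fact
  have key : ∀ f : Fin (n + 1) → F, ∃ k l, k ≠ l ∧
      (QuotientGroup.mk (s := H.subgroupOf F) (f k) = QuotientGroup.mk (f l)) := by
    intro f
    have hSbig : {i : ι | ∀ k, (f k : G) ∈ i.1} ∈ U := by
      rw [Set.setOf_forall]
      exact (Filter.iInter_mem).mpr fun k => hU (f k)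
    by_contra hcon
    push_neg at hcon
    have hB : ∀ᶠ i in (U : Filter ι),
        ∀ p : Fin (n + 1) × Fin (n + 1), p.1 ≠ p.2 → (f p.1 : G)⁻¹ * f p.2 ∉ K i := by
      rw [Filter.eventually_all]
      intro p
      by_cases hp : p.1 = p.2
      · exact Filter.Eventually.of_forall fun i hne' => absurd hp hne'
      · have hnotH : (f p.1 : G)⁻¹ * (f p.2 : G) ∉ H := by
          intro hmem
          refine hcon p.1 p.2 hp ?_
          rw [QuotientGroup.eq]
          exact hmem
        have : ¬ (∀ᶠ i in (U : Filter ι), (f p.1 : G)⁻¹ * f p.2 ∈ K i) := by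
          intro he
          exact hnotH ⟨F.mul_mem (F.inv_mem (f p.1).2) (f p.2).2, he⟩
        have := (Ultrafilter.frequently_iff_eventually (f := U)).mp
          (Filter.not_eventually.mp this)
        exact this.mono fun i hi _ => hi
    have hSe : ∀ᶠ i in (U : Filter ι), ∀ k, (f k : G) ∈ i.1 := hSbig
    obtain ⟨i, hiS, hiB⟩ := (hSe.and hB).exists
    -- pigeonhole in the finite quotient of i.1 by K i
    have hcard : Nat.card (i.1 ⧸ (K i).subgroupOf i.1) ≤ n := by
      have := hKn i
      rwa [Subgroup.relIndex, Subgroup.index_eq_card] at this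
    have hne0 : Nat.card (i.1 ⧸ (K i).subgroupOf i.1) ≠ 0 := by
      have := hKne i
      rwa [Subgroup.relIndex, Subgroup.index_eq_card] at this
    have hfinQ : Finite (i.1 ⧸ (K i).subgroupOf i.1) := Nat.finite_of_card_ne_zero hne0
    have : Fintype (i.1 ⧸ (K i).subgroupOf i.1) := Fintype.ofFinite _
    obtain ⟨k, l, hkl, he⟩ := Fintype.exists_ne_map_eq_of_card_lt
      (fun k : Fin (n + 1) =>
        QuotientGroup.mk (s := (K i).subgroupOf i.1) ⟨(f k : G), hiS k⟩)
      (by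
        rw [Fintype.card_fin]
        rw [← Nat.card_eq_fintype_card]
        exact Nat.lt_succ_of_le hcard)
    refine hiB (k, l) hkl ?_
    rw [QuotientGroup.eq] at he
    rw [Subgroup.mem_subgroupOf] at he
    simpa using he
  refine ⟨H, hHF, ?_, ?_, x, hfix⟩ <;>
  · have hp : ∀ f : Fin (n + 1) → (F ⧸ H.subgroupOf F), ∃ k l, k ≠ l ∧ f k = f l := by
      intro f
      choose f' hf' using fun k => QuotientGroup.mk_surjective (f k)
      obtain ⟨k, l, hkl, he⟩ := key f'
      exact ⟨k, l, hkl, by rw [← hf' k, ← hf' l, he]⟩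
    obtain ⟨hfinQ, hcard⟩ := card_le_of_pigeonhole hp
    rw [Subgroup.relIndex, Subgroup.index_eq_card]
    first
    | exact Nat.card_ne_zero.mpr ⟨⟨QuotientGroup.mk 1⟩, hfinQ⟩
    | exact hcard
end

section
/- Let G be an abelian group of orientation-preserving homeomorphisms of the circle S¹. If every element g ∈ G has a fixed point on S¹, then G has a global fixed point, i.e. there is a point x ∈ S¹ with g(x) = x for all g ∈ G. -/
/-- A homeomorphism of the circle `S¹ = ℝ/ℤ` is orientation preserving if it lifts to a
strictly increasing continuous map of `ℝ` commuting with unit translation. -/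
def OrientationPreserving (f : AddCircle (1 : ℝ) ≃ₜ AddCircle (1 : ℝ)) : Prop :=
  ∃ F : ℝ → ℝ, Continuous F ∧ StrictMono F ∧ (∀ x : ℝ, F (x + 1) = F x + 1) ∧
    ∀ x : ℝ, f (x : AddCircle (1 : ℝ)) = ((F x : ℝ) : AddCircle (1 : ℝ))

/-- If two reals have the same image in `ℝ/ℤ`, they differ by an integer. -/
lemma exists_int_of_coe_eq {a b : ℝ} (h : (a : AddCircle (1 : ℝ)) = b) :
    ∃ n : ℤ, a - b = n := by
  rw [QuotientAddGroup.eq_iff_sub_mem] at h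
  obtain ⟨n, hn⟩ := AddSubgroup.mem_zmultiples_iff.mp h
  exact ⟨n, by simpa [zsmul_eq_mul] using hn.symm⟩

lemma coe_sub_int (a : ℝ) (n : ℤ) :
    ((a - n : ℝ) : AddCircle (1 : ℝ)) = a := by
  rw [QuotientAddGroup.eq_iff_sub_mem]
  refine AddSubgroup.mem_zmultiples_iff.mpr ⟨-n, by simp [zsmul_eq_mul]⟩

/-- A degree-one lift commutes with all integer translations. -/
lemma lift_map_add_int (F : ℝ → ℝ) (hF : ∀ x : ℝ, F (x + 1) = F x + 1) (x : ℝ) (n : ℤ) :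
    F (x + n) = F x + n := by
  induction n using Int.induction_on with
  | zero => simp
  | succ k ih =>
      have : x + ((k : ℤ) + 1 : ℤ) = (x + (k : ℤ)) + 1 := by push_cast; ring
      rw [this, hF, ih]; push_cast; ring
  | pred k ih =>
      have h1 : F ((x + (-(k : ℤ) - 1 : ℤ)) + 1) = F (x + (-(k : ℤ) - 1 : ℤ)) + 1 := hF _
      have h2 : (x + (-(k : ℤ) - 1 : ℤ)) + 1 = x + (-(k : ℤ) : ℤ) := by push_cast; ring
      rw [h2, ih] at h1
      have := (eq_sub_of_add_eq h1.symm)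
      rw [this]; push_cast; ring

/-- Key invariance: if `fi, fj` commute on the circle, `Fj` fixes `x`, then `Fj` fixes `Fi x`. -/
lemma fix_invariant (Fi Fj : ℝ → ℝ)
    (fi fj : AddCircle (1 : ℝ) ≃ₜ AddCircle (1 : ℝ))
    (hFjm : StrictMono Fj)
    (hFj1 : ∀ x : ℝ, Fj (x + 1) = Fj x + 1)
    (hFi : ∀ x : ℝ, fi (x : AddCircle (1 : ℝ)) = ((Fi x : ℝ) : AddCircle (1 : ℝ)))
    (hFj : ∀ x : ℝ, fj (x : AddCircle (1 : ℝ)) = ((Fj x : ℝ) : AddCircle (1 : ℝ)))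
    (hc : ∀ y : AddCircle (1 : ℝ), fi (fj y) = fj (fi y))
    {x : ℝ} (hx : Fj x = x) : Fj (Fi x) = Fi x := by
  set a := Fi x with ha
  have hmk : ((Fj a : ℝ) : AddCircle (1 : ℝ)) = (a : AddCircle (1 : ℝ)) := by
    calc ((Fj a : ℝ) : AddCircle (1 : ℝ)) = fj a := (hFj a).symm
      _ = fj (fi (x : AddCircle (1:ℝ))) := by rw [hFi x]
      _ = fi (fj (x : AddCircle (1:ℝ))) := (hc _).symm
      _ = fi ((Fj x : ℝ) : AddCircle (1:ℝ)) := by rw [hFj x]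
      _ = fi (x : AddCircle (1:ℝ)) := by rw [hx]
      _ = (a : AddCircle (1:ℝ)) := hFi x
  obtain ⟨n, hn⟩ := exists_int_of_coe_eq hmk
  -- bound: x + m ≤ a < x + m + 1 with m = ⌊a - x⌋
  set m : ℤ := ⌊a - x⌋ with hm
  have hfl : x + (m : ℝ) ≤ a := by
    have := Int.floor_le (a - x); linarith
  have hfu : a < x + (m : ℝ) + 1 := by
    have := Int.lt_floor_add_one (a - x); linarith
  have hfixm : Fj (x + (m : ℝ)) = x + (m : ℝ) := by
    have := lift_map_add_int Fj hFj1 x m; rw [this, hx]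
  have hfixm1 : Fj (x + (m : ℝ) + 1) = x + (m : ℝ) + 1 := by
    rw [hFj1, hfixm]
  have hlb : x + (m : ℝ) ≤ Fj a := hfixm ▸ hFjm.monotone hfl
  have hub : Fj a < x + (m : ℝ) + 1 := hfixm1 ▸ hFjm hfu
  have h1 : (n : ℝ) < 1 := by rw [← hn] at *; linarith
  have h2 : (-1 : ℝ) < n := by rw [← hn] at *; linarith
  have : n = 0 := by
    have h1' : n < 1 := by exact_mod_cast h1
    have h2' : -1 < n := by exact_mod_cast h2
    omega
  rw [this] at hn
  simpa using sub_eq_zero.mp (by simpa using hn)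

/-- Monotone convergence to a fixed point, increasing case. -/
lemma exists_fixed_inc (Fi : ℝ → ℝ) (hc : Continuous Fi) (hm : Monotone Fi)
    (K : Set ℝ) (hK : IsClosed K) (hinv : ∀ x ∈ K, Fi x ∈ K)
    (x0 : ℝ) (hx0 : x0 ∈ K) (b : ℝ) (hb : Fi b = b) (hxb : x0 ≤ b)
    (hstep : x0 ≤ Fi x0) : ∃ q ∈ K, Fi q = q := by
  set a : ℕ → ℝ := fun n => Fi^[n] x0 with haa
  have hstepn : ∀ n, a n ≤ a (n + 1) := by
    intro n
    induction n with
    | zero => simpa [a] using hstep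
    | succ k ih =>
        have hk : a (k + 1) = Fi (a k) := Function.iterate_succ_apply' Fi _ _
        have hk2 : a (k + 1 + 1) = Fi (a (k + 1)) := Function.iterate_succ_apply' Fi _ _
        have h := hm ih
        rw [← hk] at h
        rw [hk2]; exact h
  have hmono : Monotone a := monotone_nat_of_le_succ hstepn
  have hbd : ∀ n, a n ≤ b := by
    intro n
    induction n with
    | zero => simpa [a] using hxb
    | succ k ih =>
        have : a (k + 1) = Fi (a k) := Function.iterate_succ_apply' Fi _ _
        rw [this, ← hb]; exact hm ih
  have hmem : ∀ n, a n ∈ K := by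
    intro n
    induction n with
    | zero => simpa [a] using hx0
    | succ k ih =>
        have : a (k + 1) = Fi (a k) := Function.iterate_succ_apply' Fi _ _
        rw [this]; exact hinv _ ih
  have hbdd : BddAbove (Set.range a) := ⟨b, by rintro _ ⟨n, rfl⟩; exact hbd n⟩
  have hlim : Filter.Tendsto a Filter.atTop (nhds (⨆ n, a n)) := tendsto_atTop_ciSup hmono hbdd
  set q := ⨆ n, a n with hq
  have hqK : q ∈ K := hK.mem_of_tendsto hlim (Filter.Eventually.of_forall hmem)
  have h1 : Filter.Tendsto (fun n => Fi (a n)) Filter.atTop (nhds (Fi q)) :=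
    (hc.tendsto q).comp hlim
  have h2 : Filter.Tendsto (fun n => Fi (a n)) Filter.atTop (nhds q) := by
    have : (fun n => Fi (a n)) = fun n => a (n + 1) := by
      funext n; exact (Function.iterate_succ_apply' Fi _ _).symm
    rw [this]
    exact hlim.comp (Filter.tendsto_add_atTop_nat 1)
  exact ⟨q, hqK, tendsto_nhds_unique h1 h2⟩

/-- Monotone convergence to a fixed point, decreasing case. -/
lemma exists_fixed_dec (Fi : ℝ → ℝ) (hc : Continuous Fi) (hm : Monotone Fi)
    (K : Set ℝ) (hK : IsClosed K) (hinv : ∀ x ∈ K, Fi x ∈ K)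
    (x0 : ℝ) (hx0 : x0 ∈ K) (b : ℝ) (hb : Fi b = b) (hxb : b ≤ x0)
    (hstep : Fi x0 ≤ x0) : ∃ q ∈ K, Fi q = q := by
  set a : ℕ → ℝ := fun n => Fi^[n] x0 with haa
  have hstepn : ∀ n, a (n + 1) ≤ a n := by
    intro n
    induction n with
    | zero => simpa [a] using hstep
    | succ k ih =>
        have hk : a (k + 1) = Fi (a k) := Function.iterate_succ_apply' Fi _ _
        have hk2 : a (k + 1 + 1) = Fi (a (k + 1)) := Function.iterate_succ_apply' Fi _ _
        have h := hm ih
        rw [← hk] at h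
        rw [hk2]; exact h
  have hmono : Antitone a := antitone_nat_of_succ_le hstepn
  have hbd : ∀ n, b ≤ a n := by
    intro n
    induction n with
    | zero => simpa [a] using hxb
    | succ k ih =>
        have : a (k + 1) = Fi (a k) := Function.iterate_succ_apply' Fi _ _
        rw [this, ← hb]; exact hm ih
  have hmem : ∀ n, a n ∈ K := by
    intro n
    induction n with
    | zero => simpa [a] using hx0
    | succ k ih =>
        have : a (k + 1) = Fi (a k) := Function.iterate_succ_apply' Fi _ _
        rw [this]; exact hinv _ ih
  have hbdd : BddBelow (Set.range a) := ⟨b, by rintro _ ⟨n, rfl⟩; exact hbd n⟩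
  have hlim : Filter.Tendsto a Filter.atTop (nhds (⨅ n, a n)) := tendsto_atTop_ciInf hmono hbdd
  set q := ⨅ n, a n with hq
  have hqK : q ∈ K := hK.mem_of_tendsto hlim (Filter.Eventually.of_forall hmem)
  have h1 : Filter.Tendsto (fun n => Fi (a n)) Filter.atTop (nhds (Fi q)) :=
    (hc.tendsto q).comp hlim
  have h2 : Filter.Tendsto (fun n => Fi (a n)) Filter.atTop (nhds q) := by
    have : (fun n => Fi (a n)) = fun n => a (n + 1) := by
      funext n; exact (Function.iterate_succ_apply' Fi _ _).symm
    rw [this]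
    exact hlim.comp (Filter.tendsto_add_atTop_nat 1)
  exact ⟨q, hqK, tendsto_nhds_unique h1 h2⟩

/-- Combined: a lift with a fixed point has a fixed point inside every closed invariant set. -/
lemma exists_fixed_in (Fi : ℝ → ℝ) (hc : Continuous Fi) (hm : Monotone Fi)
    (hF1 : ∀ x : ℝ, Fi (x + 1) = Fi x + 1)
    (p : ℝ) (hp : Fi p = p)
    (K : Set ℝ) (hK : IsClosed K) (hinv : ∀ x ∈ K, Fi x ∈ K)
    (x0 : ℝ) (hx0 : x0 ∈ K) : ∃ q ∈ K, Fi q = q := by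
  rcases le_total x0 (Fi x0) with h | h
  · refine exists_fixed_inc Fi hc hm K hK hinv x0 hx0 (p + (⌈x0 - p⌉ : ℝ)) ?_ ?_ h
    · rw [lift_map_add_int Fi hF1 p _, hp]
    · have := Int.le_ceil (x0 - p); linarith
  · refine exists_fixed_dec Fi hc hm K hK hinv x0 hx0 (p + (⌊x0 - p⌋ : ℝ)) ?_ ?_ h
    · rw [lift_map_add_int Fi hF1 p _, hp]
    · have := Int.floor_le (x0 - p); linarith

/-- An abelian group of orientation-preserving homeomorphisms of the circle, each element
of which has a fixed point, has a global fixed point. -/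
theorem stmt5 (G : Subgroup (AddCircle (1 : ℝ) ≃ₜ AddCircle (1 : ℝ)))
    (hcomm : ∀ f ∈ G, ∀ g ∈ G, f * g = g * f)
    (hori : ∀ f ∈ G, OrientationPreserving f)
    (hfix : ∀ f ∈ G, ∃ x : AddCircle (1 : ℝ), f x = x) :
    ∃ x : AddCircle (1 : ℝ), ∀ f ∈ G, f x = x := by
  classical
  haveI : Fact ((0 : ℝ) < 1) := ⟨one_pos⟩
  -- pointwise commutation on the circle
  have hcomm' : ∀ i j : G, ∀ y : AddCircle (1 : ℝ), i.1 (j.1 y) =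
      j.1 (i.1 y) := by
    intro i j y
    have h := hcomm i.1 i.2 j.1 j.2
    exact congrArg (fun e : AddCircle (1:ℝ) ≃ₜ AddCircle (1:ℝ) => e y) h
  -- choose normalized lifts, each with a real fixed point
  have hlift : ∀ i : G, ∃ F : ℝ → ℝ, Continuous F ∧ StrictMono F ∧
      (∀ x : ℝ, F (x + 1) = F x + 1) ∧
      (∀ x : ℝ, i.1 (x : AddCircle (1 : ℝ)) = ((F x : ℝ) : AddCircle (1 : ℝ))) ∧
      ∃ p : ℝ, F p = p := by
    intro i
    obtain ⟨F, hFc, hFm, hF1, hFd⟩ := hori i.1 i.2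
    obtain ⟨xc, hxc⟩ := hfix i.1 i.2
    obtain ⟨x, rfl⟩ := QuotientAddGroup.mk_surjective xc
    have : ((F x : ℝ) : AddCircle (1:ℝ)) = (x : AddCircle (1:ℝ)) := by
      rw [← hFd, hxc]
    obtain ⟨n, hn⟩ := exists_int_of_coe_eq this
    refine ⟨fun t => F t - n, hFc.sub continuous_const, fun u v huv => by
      have := hFm huv; simpa using this, fun t => by simp [hF1 t]; ring, fun t => ?_, x, by
        rw [sub_eq_iff_eq_add]; linarith [hn]⟩
    rw [hFd t]
    exact (coe_sub_int (F t) n).symm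
  choose F hFc hFm hF1 hFd p hp using hlift
  -- finite intersections of real fixed sets are nonempty
  have FIP : ∀ u : Finset G, ∃ x : ℝ, ∀ j ∈ u, F j x = x := by
    intro u
    induction u using Finset.induction_on with
    | empty => exact ⟨0, by simp⟩
    | @insert i u hiu ih =>
        obtain ⟨x0, hx0⟩ := ih
        set K : Set ℝ := {x : ℝ | ∀ j ∈ u, F j x = x} with hKdef
        have hKclosed : IsClosed K := by
          have : K = ⋂ j ∈ u, {x : ℝ | F j x = x} := by
            ext x; simp [hKdef]
          rw [this]
          exact isClosed_biInter fun j _ => isClosed_eq (hFc j) continuous_id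
        have hKinv : ∀ x ∈ K, F i x ∈ K := by
          intro x hx j hj
          exact fix_invariant (F i) (F j) i.1 j.1 (hFm j) (hF1 j)
            (hFd i) (hFd j) (hcomm' i j) (hx j hj)
        obtain ⟨q, hqK, hq⟩ := exists_fixed_in (F i) (hFc i) (hFm i).monotone (hF1 i)
          (p i) (hp i) K hKclosed hKinv x0 hx0
        refine ⟨q, fun j hj => ?_⟩
        rcases Finset.mem_insert.mp hj with rfl | hj
        · exact hq
        · exact hqK j hj
  -- compactness / finite intersection property on the circle
  set C : G → Set (AddCircle (1 : ℝ)) := fun i => {x | i.1 x = x} with hC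
  have hCclosed : ∀ i : G, IsClosed (C i) :=
    fun i => isClosed_eq i.1.continuous continuous_id
  have hne : (⋂ i : G, C i).Nonempty := by
    by_contra h
    rw [Set.not_nonempty_iff_eq_empty] at h
    obtain ⟨u, hu⟩ := IsCompact.elim_finite_subfamily_closed (s := (Set.univ : Set (AddCircle (1:ℝ)))) (t := C)
      isCompact_univ hCclosed (by rw [Set.univ_inter, h])
    obtain ⟨x, hx⟩ := FIP u
    have hxmem : (x : AddCircle (1 : ℝ)) ∈ Set.univ ∩ ⋂ j ∈ u, C j := by
      refine ⟨trivial, ?_⟩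
      simp only [Set.mem_iInter]
      intro j hj
      show j.1 (x : AddCircle (1:ℝ)) = (x : AddCircle (1:ℝ))
      rw [hFd j x, hx j hj]
    rw [hu] at hxmem
    exact hxmem
  obtain ⟨x, hx⟩ := hne
  refine ⟨x, fun f hf => ?_⟩
  have := Set.mem_iInter.mp hx ⟨f, hf⟩
  exact this
end

section
/- Let α : [0,1] → GL(2,ℝ) be a loop with α(0) = α(1) = I. Suppose there exists a nonzero vector x ∈ ℝ² such that the loop t ↦ α(t)·x is null-homotopic in ℝ² \ {0}. Then α is null-homotopic in GL(2,ℝ). -/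
open Matrix unitInterval

namespace Stmt7Aux

/-- Build a `GL` element from a matrix with nonzero determinant, with explicit inverse. -/
noncomputable def gl (M : Matrix (Fin 2) (Fin 2) ℝ) (h : M.det ≠ 0) : GL (Fin 2) ℝ :=
  ⟨M, (M.det)⁻¹ • M.adjugate,
    by rw [Matrix.mul_smul, Matrix.mul_adjugate, smul_smul, inv_mul_cancel₀ h, one_smul],
    by rw [Matrix.smul_mul, Matrix.adjugate_mul, smul_smul, inv_mul_cancel₀ h, one_smul]⟩

@[simp] lemma gl_val (M : Matrix (Fin 2) (Fin 2) ℝ) (h : M.det ≠ 0) :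
    (gl M h : Matrix (Fin 2) (Fin 2) ℝ) = M := rfl

lemma continuous_gl {X : Type*} [TopologicalSpace X] (f : X → Matrix (Fin 2) (Fin 2) ℝ)
    (hf : Continuous f) (h : ∀ p, (f p).det ≠ 0) :
    Continuous fun p => gl (f p) (h p) := by
  refine Units.continuous_iff.2 ⟨hf, ?_⟩
  have : (fun p => ((gl (f p) (h p))⁻¹ : GL (Fin 2) ℝ) : X → Matrix (Fin 2) (Fin 2) ℝ)
      = fun p => ((f p).det)⁻¹ • (f p).adjugate := rfl
  rw [this]
  exact (hf.matrix_det.inv₀ h).smul hf.matrix_adjugate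

/-- Complex-multiplication matrix. -/
def Cmat (v : Fin 2 → ℝ) : Matrix (Fin 2) (Fin 2) ℝ := !![v 0, -(v 1); v 1, v 0]

lemma det_Cmat (v : Fin 2 → ℝ) : (Cmat v).det = v 0 ^ 2 + v 1 ^ 2 := by
  simp [Cmat, Matrix.det_fin_two_of]; ring

lemma norm_pos (v : Fin 2 → ℝ) (h : v ≠ 0) : 0 < v 0 ^ 2 + v 1 ^ 2 := by
  have h' : v 0 ≠ 0 ∨ v 1 ≠ 0 := by
    by_contra hc
    push_neg at hc
    exact h (by funext i; fin_cases i <;> simp [hc.1, hc.2])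
  rcases h' with h' | h' <;> nlinarith [sq_nonneg (v 0), sq_nonneg (v 1), sq_abs (v 0), sq_abs (v 1), pow_pos (abs_pos.2 h') 2, sq_abs (v 0), sq_abs (v 1)]

/-- The matrix sending `x` to `v`. -/
noncomputable def Amat (x v : Fin 2 → ℝ) : Matrix (Fin 2) (Fin 2) ℝ :=
  Cmat v * (((Cmat x).det)⁻¹ • (Cmat x).adjugate)

lemma det_Amat (x v : Fin 2 → ℝ) (hx : x ≠ 0) :
    (Amat x v).det = (v 0 ^ 2 + v 1 ^ 2) * (x 0 ^ 2 + x 1 ^ 2)⁻¹ := by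
  have hxn := (norm_pos x hx).ne'
  rw [Amat, Matrix.det_mul, Matrix.det_smul, Matrix.det_adjugate, det_Cmat, det_Cmat]
  simp only [Fintype.card_fin]
  field_simp
  ring

lemma det_Amat_pos (x v : Fin 2 → ℝ) (hx : x ≠ 0) (hv : v ≠ 0) : 0 < (Amat x v).det := by
  rw [det_Amat x v hx]
  exact mul_pos (norm_pos v hv) (inv_pos.2 (norm_pos x hx))

lemma Amat_self (x : Fin 2 → ℝ) (hx : x ≠ 0) : Amat x x = 1 := by
  rw [Amat, Matrix.mul_smul, Matrix.mul_adjugate, smul_smul, det_Cmat,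
    inv_mul_cancel₀ (norm_pos x hx).ne', one_smul]

lemma Amat_mulVec (x v : Fin 2 → ℝ) (hx : x ≠ 0) : (Amat x v).mulVec x = v := by
  have hxn := (norm_pos x hx).ne'
  rw [Amat, ← Matrix.mulVec_mulVec]
  have h1 : (((Cmat x).det)⁻¹ • (Cmat x).adjugate).mulVec x = ![1, 0] := by
    rw [Matrix.smul_mulVec]
    funext i
    rw [det_Cmat]
    fin_cases i
    · show (x 0 ^ 2 + x 1 ^ 2)⁻¹ * ((Cmat x).adjugate.mulVec x 0) = 1
      rw [show (Cmat x).adjugate.mulVec x 0 = x 0 ^ 2 + x 1 ^ 2 by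
        simp [Cmat, Matrix.adjugate_fin_two, Matrix.mulVec, dotProduct,
          Fin.sum_univ_two]; ring]
      field_simp
    · show (x 0 ^ 2 + x 1 ^ 2)⁻¹ * ((Cmat x).adjugate.mulVec x 1) = 0
      rw [show (Cmat x).adjugate.mulVec x 1 = 0 by
        simp [Cmat, Matrix.adjugate_fin_two, Matrix.mulVec, dotProduct,
          Fin.sum_univ_two]; ring]
      simp
  rw [h1]
  funext i
  fin_cases i <;>
    simp [Cmat, Matrix.mulVec, dotProduct, Fin.sum_univ_two]

/-- `A` as an element of `GL`, as a function on nonzero vectors. -/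
noncomputable def Agl (x : Fin 2 → ℝ) (hx : x ≠ 0) (v : {y : Fin 2 → ℝ // y ≠ 0}) :
    GL (Fin 2) ℝ :=
  gl (Amat x v.1) (det_Amat_pos x v.1 hx v.2).ne'

lemma Cmat_eq (v : Fin 2 → ℝ) :
    Cmat v = v 0 • (1 : Matrix (Fin 2) (Fin 2) ℝ) + v 1 • !![0, -1; 1, 0] := by
  ext i j
  fin_cases i <;> fin_cases j <;> simp [Cmat, Matrix.one_apply]

lemma continuous_Cmat : Continuous fun v : {y : Fin 2 → ℝ // y ≠ 0} => Cmat v.1 := by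
  simp only [Cmat_eq]
  exact (((continuous_apply 0).comp continuous_subtype_val).smul continuous_const).add
    (((continuous_apply 1).comp continuous_subtype_val).smul continuous_const)

lemma continuous_Agl (x : Fin 2 → ℝ) (hx : x ≠ 0) : Continuous (Agl x hx) := by
  apply continuous_gl
  exact Continuous.matrix_mul continuous_Cmat continuous_const

lemma Agl_one (x : Fin 2 → ℝ) (hx : x ≠ 0) : Agl x hx ⟨x, hx⟩ = 1 :=
  Units.ext (by simp [Agl, Amat_self x hx])

lemma det_affine (M A : Matrix (Fin 2) (Fin 2) ℝ) (hD : (A - M).det = 0) (s : ℝ) :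
    ((1 - s) • M + s • A).det = (1 - s) * M.det + s * A.det := by
  simp only [Matrix.det_fin_two, Matrix.sub_apply, Matrix.add_apply, Matrix.smul_apply,
    smul_eq_mul] at hD ⊢
  linear_combination (s ^ 2 - s) * hD

end Stmt7Aux

open Stmt7Aux in
open Matrix in
/-- If a loop `α` in `GL(2,ℝ)` based at the identity evaluates at some nonzero vector
`x ∈ ℝ²` to a loop that is null-homotopic in `ℝ² \ {0}`, then `α` is null-homotopic
in `GL(2,ℝ)`. -/
theorem stmt7 (α : Path (1 : GL (Fin 2) ℝ) (1 : GL (Fin 2) ℝ))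
    (x : Fin 2 → ℝ) (hx : x ≠ 0)
    (β : Path (⟨x, hx⟩ : {y : Fin 2 → ℝ // y ≠ 0}) (⟨x, hx⟩ : {y : Fin 2 → ℝ // y ≠ 0}))
    (hβ : ∀ t : unitInterval, (β t : Fin 2 → ℝ) =
      Matrix.mulVec ((α t : Matrix (Fin 2) (Fin 2) ℝ)) x)
    (hnull : β.Homotopic (Path.refl (⟨x, hx⟩ : {y : Fin 2 → ℝ // y ≠ 0}))) :
    α.Homotopic (Path.refl (1 : GL (Fin 2) ℝ)) := by
  classical
  -- determinant of α is positive
  have hcα : Continuous fun t : unitInterval => ((α t : Matrix (Fin 2) (Fin 2) ℝ)) :=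
    Units.continuous_val.comp α.continuous
  have hdα : ∀ t, (0:ℝ) < ((α t : Matrix (Fin 2) (Fin 2) ℝ)).det := by
    intro t
    by_contra hle
    push_neg at hle
    have hne : ∀ u, ((α u : Matrix (Fin 2) (Fin 2) ℝ)).det ≠ 0 := by
      intro u
      have : IsUnit ((α u : Matrix (Fin 2) (Fin 2) ℝ)) := (α u).isUnit
      exact ((Matrix.isUnit_iff_isUnit_det _).mp this).ne_zero
    have h0 : (0:ℝ) ∈ Set.Icc (((α t : Matrix (Fin 2) (Fin 2) ℝ)).det)
        (((α 0 : Matrix (Fin 2) (Fin 2) ℝ)).det) := by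
      constructor
      · exact le_of_lt (lt_of_le_of_ne hle (hne t))
      · rw [α.source]; norm_num
    obtain ⟨u, hu⟩ := intermediate_value_univ t 0 (hcα.matrix_det) h0
    exact hne u hu
  -- the "companion" loop γ
  have hγc : Continuous fun t : unitInterval => Agl x hx (β t) :=
    (continuous_Agl x hx).comp β.continuous
  set γ : Path (1 : GL (Fin 2) ℝ) (1 : GL (Fin 2) ℝ) :=
    { toFun := fun t => Agl x hx (β t)
      continuous_toFun := hγc
      source' := by show Agl x hx (β 0) = 1; rw [β.source, Agl_one]
      target' := by show Agl x hx (β 1) = 1; rw [β.target, Agl_one] } with hγ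
  -- the A matrices agree with α on x
  have hker : ∀ t, ((Agl x hx (β t) : Matrix (Fin 2) (Fin 2) ℝ)
      - (α t : Matrix (Fin 2) (Fin 2) ℝ)).mulVec x = 0 := by
    intro t
    rw [Matrix.sub_mulVec]
    have h1 : (Agl x hx (β t) : Matrix (Fin 2) (Fin 2) ℝ).mulVec x = (β t : Fin 2 → ℝ) :=
      Amat_mulVec x _ hx
    rw [h1, ← hβ t, sub_self]
  have hD : ∀ t, ((Agl x hx (β t) : Matrix (Fin 2) (Fin 2) ℝ)
      - (α t : Matrix (Fin 2) (Fin 2) ℝ)).det = 0 :=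
    fun t => (Matrix.exists_mulVec_eq_zero_iff).mp ⟨x, hx, hker t⟩
  -- the straight-line homotopy from α to γ
  set N : unitInterval × unitInterval → Matrix (Fin 2) (Fin 2) ℝ := fun p =>
    (1 - (p.1:ℝ)) • (α p.2 : Matrix (Fin 2) (Fin 2) ℝ)
      + (p.1:ℝ) • (Agl x hx (β p.2) : Matrix (Fin 2) (Fin 2) ℝ) with hN
  have hNdet : ∀ p, (N p).det
      = (1 - (p.1:ℝ)) * ((α p.2 : Matrix (Fin 2) (Fin 2) ℝ)).det
        + (p.1:ℝ) * ((Agl x hx (β p.2) : Matrix (Fin 2) (Fin 2) ℝ)).det := by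
    intro p
    exact det_affine _ _ (hD p.2) _
  have hNpos : ∀ p, (0:ℝ) < (N p).det := by
    intro p
    rw [hNdet p]
    have h1 := hdα p.2
    have h2 : (0:ℝ) < ((Agl x hx (β p.2) : Matrix (Fin 2) (Fin 2) ℝ)).det :=
      det_Amat_pos x _ hx (β p.2).2
    have h3 : (0:ℝ) ≤ (p.1:ℝ) := p.1.2.1
    have h4 : (p.1:ℝ) ≤ 1 := p.1.2.2
    rcases eq_or_lt_of_le h3 with h0 | h0
    · rw [← h0]; simpa using h1
    · have h5 := mul_pos h0 h2
      have h6 := mul_nonneg (sub_nonneg.2 h4) h1.le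
      linarith
  have hNcont : Continuous N := by
    apply Continuous.add
    · exact ((continuous_const.sub (continuous_subtype_val.comp continuous_fst)).smul
        (hcα.comp continuous_snd))
    · exact ((continuous_subtype_val.comp continuous_fst).smul
        ((Units.continuous_val.comp hγc).comp continuous_snd))
  have H1 : Path.Homotopy α γ :=
    { toFun := fun p => gl (N p) (hNpos p).ne'
      continuous_toFun := continuous_gl N hNcont fun p => (hNpos p).ne'
      map_zero_left := by
        intro t
        apply Units.ext
        simp [hN]
      map_one_left := by
        intro t
        apply Units.ext
        simp [hN, hγ]
      prop' := by
        intro s t ht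
        apply Units.ext
        show N (s, t) = (α t : Matrix (Fin 2) (Fin 2) ℝ)
        rcases ht with ht | ht <;> subst ht
        · simp [hN, α.source, β.source, Agl_one x hx]
          rw [← add_smul]
          norm_num
        · simp [hN, α.target, β.target, Agl_one x hx]
          rw [← add_smul]
          norm_num }
  -- γ is null-homotopic via A ∘ (null-homotopy of β)
  obtain ⟨F⟩ := hnull
  have H2 : Path.Homotopy γ (Path.refl (1 : GL (Fin 2) ℝ)) :=
    { toFun := fun p => Agl x hx (F p)
      continuous_toFun := (continuous_Agl x hx).comp F.continuous
      map_zero_left := by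
        intro t
        simp [hγ]
      map_one_left := by
        intro t
        simp [Agl_one x hx]
      prop' := by
        intro s t ht
        have h : F (s, t) = β t := F.eq_fst s ht
        show Agl x hx (F (s, t)) = Agl x hx (β t)
        rw [h] }
  exact Path.Homotopic.trans ⟨H1⟩ ⟨H2⟩
end
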